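/- Let G be a regular pattern graph on a pattern set 𝓡 and let p be a joint pmf satisfying marginal positivity whose selection odds model factorizes with respect to G, and fix θ : ((j : Fin d) → X_j) → ℝ. Then for every r ∈ 𝓡 with r ≠ 1_d, every ℓ and every ρ ∈ 𝓡, the path expression of the efficient influence function of pattern r equals its ancestor expression: Σ_{Ξ ∈ Π_r} Σ_{s ∈ Ξ, s ≠ 1_d} EIF_{Ξ,s}(ℓ, ρ) = Σ_{s ∈ Ans_r, s ≠ 1_d} m(ℓ, s) · (1{ρ = s} − O_s(ℓ) · 1{ρ ∈ PA(s)}) · Σ_{ζ ∈ Υ_{s,r}} ∏_{w ∈ ζ, w ≠ s} O_w(ℓ). -/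

import Mathlib

open Finset

noncomputable section

/-- Response patterns: binary vectors of length `d`, ordered pointwise (`false < true`). -/
abbrev Pat (d : ℕ) := Fin d → Bool

/-- The all-true (fully observed) pattern `1_d`. -/
def allOnes (d : ℕ) : Pat d := fun _ => true

variable {d : ℕ}


instance (r s : Pat d) : Decidable (r ≤ s) :=
  decidable_of_iff (∀ j, r j ≤ s j) (by simp [Pi.le_def])

instance (r s : Pat d) : Decidable (r < s) :=
  decidable_of_iff (r ≤ s ∧ ¬ s ≤ r) lt_iff_le_not_ge.symm

/-- Two full-data values have the same observed part under pattern `r`. -/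
def agree {X : Fin d → Type*} (r : Pat d) (ℓ ℓ' : ∀ j, X j) : Prop :=
  ∀ j, r j = true → ℓ j = ℓ' j

instance {X : Fin d → Type*} [∀ j, DecidableEq (X j)] (r : Pat d) (ℓ ℓ' : ∀ j, X j) :
    Decidable (agree r ℓ ℓ') := by
  unfold agree; infer_instance

variable {X : Fin d → Type*} [∀ j, Fintype (X j)] [∀ j, DecidableEq (X j)]

/-- `p(ℓ, A) = Σ_{s ∈ A} p(ℓ, s)`. -/
def jointA (p : (∀ j, X j) → Pat d → ℝ) (ℓ : ∀ j, X j) (A : Finset (Pat d)) : ℝ :=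
  ∑ s ∈ A, p ℓ s

/-- `p_r(ℓ, s) = Σ_{ℓ' ~_r ℓ} p(ℓ', s)` : observed-data mass under pattern `r`. -/
def obsP (p : (∀ j, X j) → Pat d → ℝ) (r : Pat d) (ℓ : ∀ j, X j) (s : Pat d) : ℝ :=
  ∑ ℓ' ∈ univ.filter (fun ℓ' => agree r ℓ ℓ'), p ℓ' s

/-- `p_r(ℓ, A) = Σ_{s ∈ A} p_r(ℓ, s)`. -/
def obsPA (p : (∀ j, X j) → Pat d → ℝ) (r : Pat d) (ℓ : ∀ j, X j) (A : Finset (Pat d)) : ℝ :=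
  ∑ s ∈ A, obsP p r ℓ s

/-- `p` is a joint pmf on (full data) × (pattern set `𝓡`): nonnegative with total sum 1. -/
def IsJointPMF (𝓡 : Finset (Pat d)) (p : (∀ j, X j) → Pat d → ℝ) : Prop :=
  (∀ ℓ, ∀ r ∈ 𝓡, 0 ≤ p ℓ r) ∧ (∑ ℓ : ∀ j, X j, ∑ r ∈ 𝓡, p ℓ r) = 1

/-- Marginal positivity: `p_r(ℓ, r) > 0` for every `ℓ` and every `r ∈ 𝓡`. -/
def MargPos (𝓡 : Finset (Pat d)) (p : (∀ j, X j) → Pat d → ℝ) : Prop :=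
  ∀ ℓ, ∀ r ∈ 𝓡, 0 < obsP p r ℓ r

/-- Full positivity: `p(ℓ, r) > 0` for every `ℓ` and every `r ∈ 𝓡`. -/
def FullPos (𝓡 : Finset (Pat d)) (p : (∀ j, X j) → Pat d → ℝ) : Prop :=
  ∀ ℓ, ∀ r ∈ 𝓡, 0 < p ℓ r

/-- Selection odds `O_r(ℓ) = p_r(ℓ, r) / p_r(ℓ, PA(r))`. -/
def odds (p : (∀ j, X j) → Pat d → ℝ) (PA : Pat d → Finset (Pat d)) (r : Pat d)
    (ℓ : ∀ j, X j) : ℝ :=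
  obsP p r ℓ r / obsPA p r ℓ (PA r)

/-- A regular pattern graph on `𝓡`: `1_d` is a source, and every other pattern in `𝓡`
has a nonempty parent set inside `𝓡` consisting of strictly larger patterns. -/
def IsRegularGraph (𝓡 : Finset (Pat d)) (PA : Pat d → Finset (Pat d)) : Prop :=
  PA (allOnes d) = ∅ ∧
    ∀ r ∈ 𝓡, r ≠ allOnes d → (PA r).Nonempty ∧ PA r ⊆ 𝓡 ∧ ∀ s ∈ PA r, r < s

/-- The selection odds model of `p` factorizes with respect to the pattern graph. -/
def SelOddsFactorizes (𝓡 : Finset (Pat d)) (PA : Pat d → Finset (Pat d))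
    (p : (∀ j, X j) → Pat d → ℝ) : Prop :=
  ∀ r ∈ 𝓡, r ≠ allOnes d → ∀ ℓ, p ℓ r = jointA p ℓ (PA r) * odds p PA r ℓ

/-- The pattern mixture model of `p` factorizes with respect to the pattern graph. -/
def PMMFactorizes (𝓡 : Finset (Pat d)) (PA : Pat d → Finset (Pat d))
    (p : (∀ j, X j) → Pat d → ℝ) : Prop :=
  ∀ r ∈ 𝓡, r ≠ allOnes d → ∀ ℓ,
    p ℓ r * obsPA p r ℓ (PA r) = jointA p ℓ (PA r) * obsP p r ℓ r

/-- A path from `u` to `v` in the pattern graph: a nonempty sequence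
`u = r_0, r_1, …, r_m = v` of patterns in `𝓡` with `r_i ∈ PA(r_{i+1})`. -/
def IsPath (𝓡 : Finset (Pat d)) (PA : Pat d → Finset (Pat d)) (u v : Pat d)
    (Ξ : List (Pat d)) : Prop :=
  Ξ ≠ [] ∧ Ξ.head? = some u ∧ Ξ.getLast? = some v ∧ (∀ q ∈ Ξ, q ∈ 𝓡) ∧
    Ξ.Chain' (fun a b => a ∈ PA b)


set_option linter.unusedSectionVars false

section Helpers

variable {d : ℕ} {X : Fin d → Type*} [∀ j, Fintype (X j)] [∀ j, DecidableEq (X j)]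

lemma agree_symm {r : Pat d} {ℓ ℓ' : ∀ j, X j} (h : agree r ℓ ℓ') : agree r ℓ' ℓ :=
  fun j hj => (h j hj).symm

lemma agree_trans {r : Pat d} {ℓ ℓ' ℓ'' : ∀ j, X j} (h : agree r ℓ ℓ')
    (h' : agree r ℓ' ℓ'') : agree r ℓ ℓ'' := fun j hj => (h j hj).trans (h' j hj)

lemma agree_filter_eq {r : Pat d} {ℓ ℓ' : ∀ j, X j} (h : agree r ℓ ℓ') :
    (univ.filter (fun x => agree r ℓ' x)) = (univ.filter (fun x => agree r ℓ x)) := by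
  ext x; simp only [mem_filter, mem_univ, true_and]
  exact ⟨fun hx => agree_trans h hx, fun hx => agree_trans (agree_symm h) hx⟩

lemma obsP_congr (p : (∀ j, X j) → Pat d → ℝ) {r : Pat d} {ℓ ℓ' : ∀ j, X j}
    (h : agree r ℓ ℓ') (s : Pat d) : obsP p r ℓ' s = obsP p r ℓ s := by
  unfold obsP; rw [agree_filter_eq h]

lemma obsPA_congr (p : (∀ j, X j) → Pat d → ℝ) {r : Pat d} {ℓ ℓ' : ∀ j, X j}
    (h : agree r ℓ ℓ') (A : Finset (Pat d)) : obsPA p r ℓ' A = obsPA p r ℓ A := by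
  unfold obsPA; exact Finset.sum_congr rfl fun s _ => obsP_congr p h s

lemma odds_congr (p : (∀ j, X j) → Pat d → ℝ) (PA : Pat d → Finset (Pat d))
    {r : Pat d} {ℓ ℓ' : ∀ j, X j} (h : agree r ℓ ℓ') :
    odds p PA r ℓ' = odds p PA r ℓ := by
  unfold odds; rw [obsP_congr p h, obsPA_congr p h]

lemma obsP_eq_odds_mul {𝓡 : Finset (Pat d)} {PA : Pat d → Finset (Pat d)}
    {p : (∀ j, X j) → Pat d → ℝ} (hfact : SelOddsFactorizes 𝓡 PA p)
    {r : Pat d} (hr : r ∈ 𝓡) (hne : r ≠ allOnes d) (ℓ : ∀ j, X j) :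
    obsP p r ℓ r = odds p PA r ℓ * obsPA p r ℓ (PA r) := by
  have h1 : obsP p r ℓ r
      = ∑ ℓ' ∈ univ.filter (fun x => agree r ℓ x), jointA p ℓ' (PA r) * odds p PA r ℓ := by
    unfold obsP
    refine Finset.sum_congr rfl fun ℓ' hℓ' => ?_
    have ha : agree r ℓ ℓ' := by simpa using hℓ'
    rw [hfact r hr hne ℓ', odds_congr p PA ha]
  rw [h1, ← Finset.sum_mul, mul_comm]
  congr 1
  unfold jointA obsPA obsP
  rw [Finset.sum_comm]

lemma obsPA_ne_zero {𝓡 : Finset (Pat d)} {PA : Pat d → Finset (Pat d)}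
    {p : (∀ j, X j) → Pat d → ℝ} (hpos : MargPos 𝓡 p) (hfact : SelOddsFactorizes 𝓡 PA p)
    {r : Pat d} (hr : r ∈ 𝓡) (hne : r ≠ allOnes d) (ℓ : ∀ j, X j) :
    obsPA p r ℓ (PA r) ≠ 0 := by
  intro h0
  have := obsP_eq_odds_mul hfact hr hne ℓ
  rw [h0, mul_zero] at this
  exact absurd this (ne_of_gt (hpos ℓ r hr))

lemma odds_ne_zero {𝓡 : Finset (Pat d)} {PA : Pat d → Finset (Pat d)}
    {p : (∀ j, X j) → Pat d → ℝ} (hpos : MargPos 𝓡 p) (hfact : SelOddsFactorizes 𝓡 PA p)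
    {r : Pat d} (hr : r ∈ 𝓡) (hne : r ≠ allOnes d) (ℓ : ∀ j, X j) :
    odds p PA r ℓ ≠ 0 := by
  intro h0
  have := obsP_eq_odds_mul hfact hr hne ℓ
  rw [h0, zero_mul] at this
  exact absurd this (ne_of_gt (hpos ℓ r hr))

/-- The measure: number of `false` coordinates. -/
def mes (r : Pat d) : ℕ := (Finset.univ.filter fun j => r j = false).card

lemma bool_le_false {a : Bool} (h : a ≤ false) : a = false := by
  revert h; cases a <;> decide

lemma bool_le_eq {a b : Bool} (h : a ≤ b) (h2 : a ≠ b) : a = false ∧ b = true := by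
  revert h h2; cases a <;> cases b <;> decide

lemma mes_lt {r t : Pat d} (h : r < t) : mes t < mes r := by
  obtain ⟨hle, hne⟩ := lt_iff_le_and_ne.1 h
  have hj : ∃ j, r j ≠ t j := by
    by_contra hc; push_neg at hc; exact hne (funext hc)
  obtain ⟨j, hj⟩ := hj
  obtain ⟨hrj, htj⟩ := bool_le_eq (hle j) hj
  apply Finset.card_lt_card
  constructor
  · intro i hi
    simp only [Finset.mem_filter, Finset.mem_univ, true_and] at hi ⊢
    exact bool_le_false (hi ▸ hle i)
  · intro hsub
    have := hsub (by simp only [Finset.mem_filter, Finset.mem_univ, true_and]; exact hrj)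
    simp only [Finset.mem_filter, Finset.mem_univ, true_and, htj] at this
    exact absurd this (by simp)

lemma mes_zero {r : Pat d} (h : mes r = 0) : r = allOnes d := by
  funext j
  have : j ∉ Finset.univ.filter fun j => r j = false := by
    rw [Finset.card_eq_zero.1 h]; exact Finset.notMem_empty j
  simp only [Finset.mem_filter, Finset.mem_univ, true_and] at this
  revert this; simp only [allOnes]; cases r j <;> simp

lemma allOnes_le_iff {s : Pat d} : allOnes d ≤ s ↔ s = allOnes d := by
  constructor
  · intro h; funext j; have h2 := h j
    revert h2; simp only [allOnes]; cases s j <;> simp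
  · rintro rfl; exact le_refl _

end Helpers

section PathHelpers

variable {d : ℕ} {X : Fin d → Type*} [∀ j, Fintype (X j)] [∀ j, DecidableEq (X j)]
variable {𝓡 : Finset (Pat d)} {PA : Pat d → Finset (Pat d)}

lemma chain_gt_of_chain_PA (hG : IsRegularGraph 𝓡 PA) :
    ∀ (Ξ : List (Pat d)), (∀ q ∈ Ξ, q ∈ 𝓡) → Ξ.Chain' (fun a b => a ∈ PA b) →
      Ξ.Chain' (fun a b => b < a) := by
  intro Ξ
  induction Ξ with
  | nil => simp [List.Chain']
  | cons a l ih =>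
    cases l with
    | nil => simp [List.Chain']
    | cons b m =>
      intro hmem hch
      simp only [List.Chain', List.isChain_cons_cons] at hch ⊢
      refine ⟨?_, ih (fun q hq => hmem q (List.mem_cons_of_mem a hq)) hch.2⟩
      have hb : b ∈ 𝓡 := hmem b (by simp)
      by_cases hbe : b = allOnes d
      · subst hbe
        rw [hG.1] at hch
        exact absurd hch.1 (Finset.notMem_empty a)
      · exact (hG.2 b hb hbe).2.2 a hch.1

lemma isPath_pairwise (hG : IsRegularGraph 𝓡 PA) {u v : Pat d} {Ξ : List (Pat d)}
    (h : IsPath 𝓡 PA u v Ξ) : Ξ.Pairwise (fun a b => b < a) :=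
  List.isChain_iff_pairwise.1 (chain_gt_of_chain_PA hG Ξ h.2.2.2.1 h.2.2.2.2)

lemma isPath_getLast {u v : Pat d} {Ξ : List (Pat d)} (h : IsPath 𝓡 PA u v Ξ) :
    Ξ.getLast h.1 = v := by
  have := h.2.2.1
  rw [List.getLast?_eq_getLast h.1] at this
  exact Option.some_injective _ this

lemma isPath_head {u v : Pat d} {Ξ : List (Pat d)} (h : IsPath 𝓡 PA u v Ξ) :
    Ξ.head h.1 = u := by
  have := h.2.1
  rw [List.head?_eq_head h.1] at this
  exact Option.some_injective _ this

/-- every element of a path is `= v` or `> v`. -/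
lemma isPath_mem_gt (hG : IsRegularGraph 𝓡 PA) {u v : Pat d} {Ξ : List (Pat d)}
    (h : IsPath 𝓡 PA u v Ξ) : ∀ q ∈ Ξ, q = v ∨ v < q := by
  intro q hq
  have hpw := isPath_pairwise hG h
  have hdec : Ξ.dropLast ++ [v] = Ξ := by
    conv_rhs => rw [← List.dropLast_append_getLast h.1, isPath_getLast h]
  rw [← hdec] at hq hpw
  rw [List.mem_append] at hq
  rcases hq with hq | hq
  · exact Or.inr ((List.pairwise_append.1 hpw).2.2 q hq v (by simp))
  · exact Or.inl (by simpa using hq)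

/-- every element of a path is `= u` or `< u`. -/
lemma isPath_mem_lt (hG : IsRegularGraph 𝓡 PA) {u v : Pat d} {Ξ : List (Pat d)}
    (h : IsPath 𝓡 PA u v Ξ) : ∀ q ∈ Ξ, q = u ∨ q < u := by
  intro q hq
  have hpw := isPath_pairwise hG h
  have hdec : u :: Ξ.tail = Ξ := by
    conv_rhs => rw [← List.cons_head_tail h.1, isPath_head h]
  rw [← hdec] at hq hpw
  rcases List.mem_cons.1 hq with hq | hq
  · exact Or.inl hq
  · exact Or.inr ((List.pairwise_cons.1 hpw).1 q hq)

lemma isPath_le (hG : IsRegularGraph 𝓡 PA) {u v : Pat d} {Ξ : List (Pat d)}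
    (h : IsPath 𝓡 PA u v Ξ) : v ≤ u := by
  have hv : v ∈ Ξ := by rw [← isPath_getLast h]; exact List.getLast_mem h.1
  rcases isPath_mem_lt hG h v hv with h' | h'
  · exact h'.le
  · exact h'.le

lemma isPath_self_iff (hG : IsRegularGraph 𝓡 PA) {v : Pat d} (hv : v ∈ 𝓡)
    (Ξ : List (Pat d)) : IsPath 𝓡 PA v v Ξ ↔ Ξ = [v] := by
  constructor
  · intro h
    have hpw := isPath_pairwise hG h
    obtain ⟨a, l, rfl⟩ := List.exists_cons_of_ne_nil h.1
    have ha : a = v := by simpa using h.2.1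
    subst ha
    cases l with
    | nil => rfl
    | cons b m =>
      exfalso
      have hlast : (b :: m).getLast (List.cons_ne_nil b m) = a := by
        have h2 := h.2.2.1
        rw [List.getLast?_cons_cons, List.getLast?_eq_getLast (List.cons_ne_nil b m)] at h2
        exact Option.some_injective _ h2
      have hmem : (b :: m).getLast (List.cons_ne_nil b m) ∈ b :: m := List.getLast_mem _
      have := (List.pairwise_cons.1 hpw).1 _ hmem
      rw [hlast] at this
      exact lt_irrefl a this
  · rintro rfl
    exact ⟨by simp, by simp, by simp, by simpa using hv, by simp [List.Chain']⟩

/-- decomposition of a path at its last step. -/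
lemma isPath_decomp (hG : IsRegularGraph 𝓡 PA) {s r : Pat d} (hr : r ∈ 𝓡)
    (hsr : s ≠ r) (Ξ : List (Pat d)) :
    IsPath 𝓡 PA s r Ξ ↔ ∃ t ∈ PA r, ∃ ζ, IsPath 𝓡 PA s t ζ ∧ Ξ = ζ ++ [r] := by
  constructor
  · intro h
    have hdec : Ξ.dropLast ++ [r] = Ξ := by
      conv_rhs => rw [← List.dropLast_append_getLast h.1, isPath_getLast h]
    have hζne : Ξ.dropLast ≠ [] := by
      intro h0
      rw [h0, List.nil_append] at hdec
      rw [← hdec] at h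
      have := isPath_head h
      simp at this
      exact hsr this.symm
    set ζ := Ξ.dropLast with hζ
    have hch : Ξ.Chain' (fun a b => a ∈ PA b) := h.2.2.2.2
    rw [← hdec] at hch
    rw [List.Chain', List.isChain_append] at hch
    have ht : ζ.getLast hζne ∈ PA r := by
      exact hch.2.2 (ζ.getLast hζne)
        (by rw [List.getLast?_eq_getLast hζne]; rfl) r (by simp)
    refine ⟨ζ.getLast hζne, ht, ζ, ⟨hζne, ?_, ?_, ?_, hch.1⟩, hdec.symm⟩
    · rw [← h.2.1, ← hdec, List.head?_append_of_ne_nil _ hζne]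
    · rw [List.getLast?_eq_getLast hζne]
    · intro q hq
      exact h.2.2.2.1 q (by rw [← hdec]; exact List.mem_append_left _ hq)
  · rintro ⟨t, ht, ζ, hζ, rfl⟩
    refine ⟨by simp [hζ.1], ?_, ?_, ?_, ?_⟩
    · rw [List.head?_append_of_ne_nil _ hζ.1, hζ.2.1]
    · exact List.getLast?_concat
    · intro q hq
      rcases List.mem_append.1 hq with hq | hq
      · exact hζ.2.2.2.1 q hq
      · rw [List.mem_singleton.1 hq]; exact hr
    · rw [List.Chain', List.isChain_append]
      refine ⟨hζ.2.2.2.2, by simp, ?_⟩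
      intro x hx y hy
      rw [hζ.2.2.1] at hx
      simp at hx hy
      rw [← hx, ← hy]
      exact ht

end PathHelpers

section MainDefs

variable {d : ℕ} {X : Fin d → Type*} [∀ j, Fintype (X j)] [∀ j, DecidableEq (X j)]

/-- suffix product `∏_{w ∈ Ξ, w < s} O_w(ℓ)`. -/
def sufP (p : (∀ j, X j) → Pat d → ℝ) (PA : Pat d → Finset (Pat d)) (ℓ : ∀ j, X j)
    (s : Pat d) (Ξ : List (Pat d)) : ℝ :=
  (Ξ.map fun w => if w < s then odds p PA w ℓ else 1).prod

def numer (p : (∀ j, X j) → Pat d → ℝ) (PA : Pat d → Finset (Pat d))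
    (θ : (∀ j, X j) → ℝ) (ℓ : ∀ j, X j) (s : Pat d) (Ξ : List (Pat d)) : ℝ :=
  ∑ ℓ' ∈ univ.filter (fun ℓ' => agree s ℓ ℓ'),
    θ ℓ' * p ℓ' (allOnes d) *
      (Ξ.map fun τ => if s < τ ∧ τ ≠ allOnes d then odds p PA τ ℓ' else 1).prod

def indT (p : (∀ j, X j) → Pat d → ℝ) (PA : Pat d → Finset (Pat d)) (ℓ : ∀ j, X j)
    (ρ s : Pat d) : ℝ :=
  (if ρ = s then (1:ℝ) else 0) - odds p PA s ℓ * (if ρ ∈ PA s then (1:ℝ) else 0)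

def pathT (p : (∀ j, X j) → Pat d → ℝ) (PA : Pat d → Finset (Pat d))
    (θ : (∀ j, X j) → ℝ) (ℓ : ∀ j, X j) (ρ : Pat d) (Ξ : List (Pat d)) : ℝ :=
  (Ξ.map fun s => if s = allOnes d then (0:ℝ) else
    (numer p PA θ ℓ s Ξ / obsPA p s ℓ (PA s)) * indT p PA ℓ ρ s * sufP p PA ℓ s Ξ).sum

def mT (p : (∀ j, X j) → Pat d → ℝ) (θ : (∀ j, X j) → ℝ) (ℓ : ∀ j, X j) (s : Pat d) : ℝ :=
  (∑ ℓ' ∈ univ.filter (fun ℓ' => agree s ℓ ℓ'), θ ℓ' * p ℓ' s) / obsP p s ℓ s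

def zP (p : (∀ j, X j) → Pat d → ℝ) (PA : Pat d → Finset (Pat d)) (ℓ : ∀ j, X j)
    (s : Pat d) (ζ : List (Pat d)) : ℝ :=
  (ζ.map fun w => if w = s then (1:ℝ) else odds p PA w ℓ).prod

variable {𝓡 : Finset (Pat d)} {PA : Pat d → Finset (Pat d)}
  {Υ : Pat d → Pat d → Finset (List (Pat d))}

lemma Upsilon_self (hG : IsRegularGraph 𝓡 PA)
    (hΥ : ∀ u v, ∀ Ξ, Ξ ∈ Υ u v ↔ IsPath 𝓡 PA u v Ξ) {v : Pat d} (hv : v ∈ 𝓡) :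
    Υ v v = {[v]} := by
  ext Ξ; rw [hΥ, isPath_self_iff hG hv, Finset.mem_singleton]

lemma Upsilon_empty (hG : IsRegularGraph 𝓡 PA)
    (hΥ : ∀ u v, ∀ Ξ, Ξ ∈ Υ u v ↔ IsPath 𝓡 PA u v Ξ) {u v : Pat d} (h : ¬ v ≤ u) :
    Υ u v = ∅ :=
  Finset.eq_empty_of_forall_notMem fun Ξ hΞ => h (isPath_le hG ((hΥ u v Ξ).1 hΞ))

lemma sum_Upsilon_decomp (hG : IsRegularGraph 𝓡 PA)
    (hΥ : ∀ u v, ∀ Ξ, Ξ ∈ Υ u v ↔ IsPath 𝓡 PA u v Ξ) {s r : Pat d} (hr : r ∈ 𝓡)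
    (hsr : s ≠ r) (f : List (Pat d) → ℝ) :
    ∑ Ξ ∈ Υ s r, f Ξ = ∑ t ∈ PA r, ∑ ζ ∈ Υ s t, f (ζ ++ [r]) := by
  have hset : Υ s r = (PA r).biUnion (fun t => (Υ s t).image (· ++ [r])) := by
    ext Ξ
    rw [hΥ, isPath_decomp hG hr hsr, Finset.mem_biUnion]
    constructor
    · rintro ⟨t, ht, ζ, hζ, rfl⟩
      exact ⟨t, ht, Finset.mem_image.2 ⟨ζ, (hΥ s t ζ).2 hζ, rfl⟩⟩
    · rintro ⟨t, ht, hmem⟩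
      obtain ⟨ζ, hζ, rfl⟩ := Finset.mem_image.1 hmem
      exact ⟨t, ht, ζ, (hΥ s t ζ).1 hζ, rfl⟩
  rw [hset, Finset.sum_biUnion]
  · refine Finset.sum_congr rfl fun t _ => ?_
    rw [Finset.sum_image]
    intro ζ _ ζ' _ h
    exact List.append_left_injective _ h
  · intro t1 h1 t2 h2 hne
    simp only [Function.onFun]
    rw [Finset.disjoint_left]
    intro x hx1 hx2
    obtain ⟨ζ, hζ, rfl⟩ := Finset.mem_image.1 hx1
    obtain ⟨ζ', hζ', heq⟩ := Finset.mem_image.1 hx2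
    have hζζ : ζ' = ζ := List.append_left_injective _ heq
    subst hζζ
    have hp1 := (hΥ s t1 _).1 hζ
    have hp2 := (hΥ s t2 _).1 hζ'
    exact hne (by rw [← isPath_getLast hp1, ← isPath_getLast hp2])

lemma pathsum {p : (∀ j, X j) → Pat d → ℝ} (h𝓡 : allOnes d ∈ 𝓡)
    (hG : IsRegularGraph 𝓡 PA) (hfact : SelOddsFactorizes 𝓡 PA p)
    (hΥ : ∀ u v, ∀ Ξ, Ξ ∈ Υ u v ↔ IsPath 𝓡 PA u v Ξ) :
    ∀ (n : ℕ) (r : Pat d), mes r ≤ n → r ∈ 𝓡 → ∀ (ℓ' : ∀ j, X j),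
      (∑ Ξ ∈ Υ (allOnes d) r, p ℓ' (allOnes d) *
        (Ξ.map fun τ => if τ ≠ allOnes d then odds p PA τ ℓ' else 1).prod) = p ℓ' r := by
  intro n
  induction n with
  | zero =>
    intro r hmes hr ℓ'
    have h0 : r = allOnes d := mes_zero (Nat.le_zero.1 hmes)
    subst h0
    rw [Upsilon_self hG hΥ h𝓡]
    simp
  | succ n ih =>
    intro r hmes hr ℓ'
    by_cases hrne : r = allOnes d
    · subst hrne; rw [Upsilon_self hG hΥ h𝓡]; simp
    · rw [sum_Upsilon_decomp hG hΥ hr (fun h => hrne h.symm)]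
      rw [hfact r hr hrne ℓ']
      unfold jointA
      rw [Finset.sum_mul]
      refine Finset.sum_congr rfl fun t ht => ?_
      have htmem : t ∈ 𝓡 := (hG.2 r hr hrne).2.1 ht
      have htlt : r < t := (hG.2 r hr hrne).2.2 t ht
      have hmes' : mes t ≤ n := Nat.lt_succ_iff.1 (lt_of_lt_of_le (mes_lt htlt) hmes)
      rw [← ih t hmes' htmem ℓ', Finset.sum_mul]
      refine Finset.sum_congr rfl fun ζ _ => ?_
      rw [List.map_append, List.prod_append]
      simp only [List.map_cons, List.map_nil, List.prod_cons, List.prod_nil, mul_one]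
      rw [if_pos hrne]
      ring

end MainDefs

section MainAux

variable {d : ℕ} {X : Fin d → Type*} [∀ j, Fintype (X j)] [∀ j, DecidableEq (X j)]

lemma main_aux (𝓡 : Finset (Pat d)) (h𝓡 : allOnes d ∈ 𝓡)
    (PA : Pat d → Finset (Pat d)) (hG : IsRegularGraph 𝓡 PA)
    (p : (∀ j, X j) → Pat d → ℝ) (hpos : MargPos 𝓡 p)
    (hfact : SelOddsFactorizes 𝓡 PA p) (θ : (∀ j, X j) → ℝ)
    (Υ : Pat d → Pat d → Finset (List (Pat d)))
    (hΥ : ∀ u v, ∀ Ξ, Ξ ∈ Υ u v ↔ IsPath 𝓡 PA u v Ξ) :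
    ∀ (n : ℕ) (r : Pat d), mes r ≤ n → r ∈ 𝓡 → ∀ (ℓ : ∀ j, X j) (ρ : Pat d),
      (∑ Ξ ∈ Υ (allOnes d) r, pathT p PA θ ℓ ρ Ξ)
        = ∑ s ∈ 𝓡.erase (allOnes d),
            mT p θ ℓ s * indT p PA ℓ ρ s * ∑ ζ ∈ Υ s r, zP p PA ℓ s ζ := by
  have base : ∀ (ℓ : ∀ j, X j) (ρ : Pat d),
      (∑ Ξ ∈ Υ (allOnes d) (allOnes d), pathT p PA θ ℓ ρ Ξ)
        = ∑ s ∈ 𝓡.erase (allOnes d),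
            mT p θ ℓ s * indT p PA ℓ ρ s * ∑ ζ ∈ Υ s (allOnes d), zP p PA ℓ s ζ := by
    intro ℓ ρ
    rw [Upsilon_self hG hΥ h𝓡, Finset.sum_singleton]
    have hL : pathT p PA θ ℓ ρ [allOnes d] = 0 := by simp [pathT]
    rw [hL]
    symm
    refine Finset.sum_eq_zero fun s hs => ?_
    have hs1 : s ≠ allOnes d := (Finset.mem_erase.1 hs).1
    have he : Υ s (allOnes d) = ∅ :=
      Upsilon_empty hG hΥ (fun hle => hs1 (allOnes_le_iff.1 hle))
    rw [he]
    simp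
  intro n
  induction n with
  | zero =>
    intro r hmes hr ℓ ρ
    have h0 : r = allOnes d := mes_zero (Nat.le_zero.1 hmes)
    subst h0
    exact base ℓ ρ
  | succ n ih =>
    intro r hmes hr ℓ ρ
    by_cases hrne : r = allOnes d
    · subst hrne; exact base ℓ ρ
    · have hreg := hG.2 r hr hrne
      have hOne_ne : allOnes d ≠ r := fun h => hrne h.symm
      have hD := obsPA_ne_zero hpos hfact hr hrne ℓ
      have hO := odds_ne_zero hpos hfact hr hrne ℓ
      -- abbreviation for the extra term of a path ending at r through ζ
      set E : List (Pat d) → ℝ := fun ζ =>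
        (∑ ℓ' ∈ univ.filter (fun ℓ' => agree r ℓ ℓ'),
          θ ℓ' * p ℓ' (allOnes d) *
            (ζ.map fun τ => if τ ≠ allOnes d then odds p PA τ ℓ' else 1).prod)
          / obsPA p r ℓ (PA r) * indT p PA ℓ ρ r with hE
      -- Step 1: pointwise decomposition of pathT on ζ ++ [r]
      have key1 : ∀ t ∈ PA r, ∀ ζ ∈ Υ (allOnes d) t,
          pathT p PA θ ℓ ρ (ζ ++ [r])
            = odds p PA r ℓ * pathT p PA θ ℓ ρ ζ + E ζ := by
        intro t ht ζ hζ
        have hpath : IsPath 𝓡 PA (allOnes d) t ζ := (hΥ _ _ _).1 hζ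
        have hrt : r < t := hreg.2.2 t ht
        have hgt : ∀ q ∈ ζ, r < q := by
          intro q hq
          rcases isPath_mem_gt hG hpath q hq with h' | h'
          · rw [h']; exact hrt
          · exact lt_trans hrt h'
        unfold pathT
        rw [List.map_append, List.sum_append]
        congr 1
        · -- sum over elements of ζ
          rw [← List.sum_map_mul_left]
          refine congrArg List.sum (List.map_congr_left fun s hs => ?_)
          by_cases hs1 : s = allOnes d
          · rw [if_pos hs1, if_pos hs1, mul_zero]
          · rw [if_neg hs1, if_neg hs1]
            have hrs : r < s := hgt s hs
            have hnum : numer p PA θ ℓ s (ζ ++ [r]) = numer p PA θ ℓ s ζ := by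
              unfold numer
              refine Finset.sum_congr rfl fun ℓ' _ => ?_
              rw [List.map_append, List.prod_append]
              simp only [List.map_cons, List.map_nil, List.prod_cons, List.prod_nil, mul_one]
              rw [if_neg (fun hc => absurd hc.1 (lt_asymm hrs)), mul_one]
            have hsuf : sufP p PA ℓ s (ζ ++ [r]) = sufP p PA ℓ s ζ * odds p PA r ℓ := by
              unfold sufP
              rw [List.map_append, List.prod_append]
              simp only [List.map_cons, List.map_nil, List.prod_cons, List.prod_nil, mul_one]
              rw [if_pos hrs]
            rw [hnum, hsuf]
            ring
        · -- the final element r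
          simp only [List.map_cons, List.map_nil, List.sum_cons, List.sum_nil, add_zero]
          rw [if_neg hrne]
          have hsuf : sufP p PA ℓ r (ζ ++ [r]) = 1 := by
            unfold sufP
            refine List.prod_eq_one fun x hx => ?_
            obtain ⟨w, hw, rfl⟩ := List.mem_map.1 hx
            rcases List.mem_append.1 hw with hw | hw
            · exact if_neg (lt_asymm (hgt w hw))
            · rw [List.mem_singleton.1 hw]
              exact if_neg (lt_irrefl r)
          have hnum : numer p PA θ ℓ r (ζ ++ [r])
              = ∑ ℓ' ∈ univ.filter (fun ℓ' => agree r ℓ ℓ'),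
                  θ ℓ' * p ℓ' (allOnes d) *
                    (ζ.map fun τ => if τ ≠ allOnes d then odds p PA τ ℓ' else 1).prod := by
            unfold numer
            refine Finset.sum_congr rfl fun ℓ' _ => ?_
            rw [List.map_append, List.prod_append]
            simp only [List.map_cons, List.map_nil, List.prod_cons, List.prod_nil, mul_one]
            rw [if_neg (fun hc => lt_irrefl r hc.1), mul_one]
            congr 2
            refine List.map_congr_left fun τ hτ => ?_
            have hτgt : r < τ := hgt τ hτ
            by_cases h1 : τ = allOnes d
            · rw [if_neg (fun hc : r < τ ∧ τ ≠ allOnes d => hc.2 h1), if_neg (fun hc => hc h1)]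
            · rw [if_pos ⟨hτgt, h1⟩, if_pos h1]
          rw [hnum, hsuf, mul_one, hE]
      -- Step 2: the sum of the extra terms
      have key2 : (∑ t ∈ PA r, ∑ ζ ∈ Υ (allOnes d) t, E ζ)
          = mT p θ ℓ r * indT p PA ℓ ρ r := by
        rw [hE]
        simp only
        -- pull the division and the indicator out of the double sum
        have h1 : ∀ t ∈ PA r, (∑ ζ ∈ Υ (allOnes d) t,
            (∑ ℓ' ∈ univ.filter (fun ℓ' => agree r ℓ ℓ'),
              θ ℓ' * p ℓ' (allOnes d) *
                (ζ.map fun τ => if τ ≠ allOnes d then odds p PA τ ℓ' else 1).prod)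
              / obsPA p r ℓ (PA r) * indT p PA ℓ ρ r)
            = (∑ ℓ' ∈ univ.filter (fun ℓ' => agree r ℓ ℓ'), θ ℓ' * p ℓ' t)
              / obsPA p r ℓ (PA r) * indT p PA ℓ ρ r := by
          intro t ht
          have htmem : t ∈ 𝓡 := hreg.2.1 ht
          have htlt : r < t := hreg.2.2 t ht
          have hmes' : mes t ≤ n := Nat.lt_succ_iff.1 (lt_of_lt_of_le (mes_lt htlt) hmes)
          rw [← Finset.sum_mul, ← Finset.sum_div]
          congr 2
          rw [Finset.sum_comm]
          refine Finset.sum_congr rfl fun ℓ' _ => ?_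
          rw [← pathsum h𝓡 hG hfact hΥ n t hmes' htmem ℓ', Finset.mul_sum]
          refine Finset.sum_congr rfl fun ζ _ => by ring
        rw [Finset.sum_congr rfl h1]
        rw [← Finset.sum_mul, ← Finset.sum_div, Finset.sum_comm]
        have h2 : (∑ ℓ' ∈ univ.filter (fun ℓ' => agree r ℓ ℓ'), ∑ t ∈ PA r, θ ℓ' * p ℓ' t)
            = (∑ ℓ' ∈ univ.filter (fun ℓ' => agree r ℓ ℓ'), θ ℓ' * p ℓ' r) / odds p PA r ℓ := by
          rw [eq_div_iff hO, Finset.sum_mul]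
          refine Finset.sum_congr rfl fun ℓ' hℓ' => ?_
          have ha : agree r ℓ ℓ' := by simpa using hℓ'
          rw [← Finset.mul_sum]
          have : (∑ t ∈ PA r, p ℓ' t) = jointA p ℓ' (PA r) := rfl
          rw [this]
          have hf := hfact r hr hrne ℓ'
          rw [odds_congr p PA ha] at hf
          rw [mul_assoc, ← hf]
        rw [h2, div_div]
        have h3 : odds p PA r ℓ * obsPA p r ℓ (PA r) = obsP p r ℓ r :=
          (obsP_eq_odds_mul hfact hr hrne ℓ).symm
        rw [h3]
        rfl
      -- Step 3: decomposition of the right-hand side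
      have key3 : (∑ s ∈ 𝓡.erase (allOnes d),
            mT p θ ℓ s * indT p PA ℓ ρ s * ∑ ζ ∈ Υ s r, zP p PA ℓ s ζ)
          = odds p PA r ℓ * (∑ t ∈ PA r, ∑ s ∈ 𝓡.erase (allOnes d),
              mT p θ ℓ s * indT p PA ℓ ρ s * ∑ ζ ∈ Υ s t, zP p PA ℓ s ζ)
            + mT p θ ℓ r * indT p PA ℓ ρ r := by
        have hrmem : r ∈ 𝓡.erase (allOnes d) := Finset.mem_erase.2 ⟨hrne, hr⟩
        rw [← Finset.sum_erase_add (𝓡.erase (allOnes d)) _ hrmem]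
        have hrterm : mT p θ ℓ r * indT p PA ℓ ρ r * (∑ ζ ∈ Υ r r, zP p PA ℓ r ζ)
            = mT p θ ℓ r * indT p PA ℓ ρ r := by
          rw [Upsilon_self hG hΥ hr, Finset.sum_singleton]
          simp [zP]
        rw [hrterm]
        congr 1
        have hper : ∀ s ∈ (𝓡.erase (allOnes d)).erase r,
            mT p θ ℓ s * indT p PA ℓ ρ s * ∑ ζ ∈ Υ s r, zP p PA ℓ s ζ
              = odds p PA r ℓ * ∑ t ∈ PA r,
                  mT p θ ℓ s * indT p PA ℓ ρ s * ∑ ζ ∈ Υ s t, zP p PA ℓ s ζ := by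
          intro s hs
          have hsr : s ≠ r := (Finset.mem_erase.1 hs).1
          rw [sum_Upsilon_decomp hG hΥ hr hsr]
          have hz : ∀ t ∈ PA r, ∀ ζ ∈ Υ s t,
              zP p PA ℓ s (ζ ++ [r]) = zP p PA ℓ s ζ * odds p PA r ℓ := by
            intro t _ ζ _
            unfold zP
            rw [List.map_append, List.prod_append]
            simp only [List.map_cons, List.map_nil, List.prod_cons, List.prod_nil, mul_one]
            rw [if_neg (fun h => hsr h.symm)]
          rw [Finset.sum_congr rfl fun t ht =>
            Finset.sum_congr rfl fun ζ hζ => hz t ht ζ hζ]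
          have hpull : (∑ t ∈ PA r, ∑ ζ ∈ Υ s t, zP p PA ℓ s ζ * odds p PA r ℓ)
              = (∑ t ∈ PA r, ∑ ζ ∈ Υ s t, zP p PA ℓ s ζ) * odds p PA r ℓ := by
            rw [Finset.sum_mul]
            exact Finset.sum_congr rfl fun t _ => (Finset.sum_mul _ _ _).symm
          rw [hpull, ← Finset.mul_sum]
          ring
        rw [Finset.sum_congr rfl hper, ← Finset.mul_sum, Finset.sum_comm]
        congr 1
        refine Finset.sum_congr rfl fun t ht => ?_
        apply Finset.sum_erase
        have htlt : r < t := hreg.2.2 t ht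
        have he : Υ r t = ∅ :=
          Upsilon_empty hG hΥ (fun hle => absurd htlt (not_lt_of_ge hle))
        rw [he]
        simp
      -- put everything together
      rw [sum_Upsilon_decomp hG hΥ hr hOne_ne]
      rw [Finset.sum_congr rfl fun t ht =>
        Finset.sum_congr rfl fun ζ hζ => key1 t ht ζ hζ]
      have hsplit : (∑ t ∈ PA r, ∑ ζ ∈ Υ (allOnes d) t,
            (odds p PA r ℓ * pathT p PA θ ℓ ρ ζ + E ζ))
          = odds p PA r ℓ * (∑ t ∈ PA r, ∑ ζ ∈ Υ (allOnes d) t, pathT p PA θ ℓ ρ ζ)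
            + ∑ t ∈ PA r, ∑ ζ ∈ Υ (allOnes d) t, E ζ := by
        rw [Finset.mul_sum, ← Finset.sum_add_distrib]
        refine Finset.sum_congr rfl fun t _ => ?_
        rw [Finset.mul_sum, ← Finset.sum_add_distrib]
      rw [hsplit, key2, key3]
      congr 2
      refine Finset.sum_congr rfl fun t ht => ?_
      have htmem : t ∈ 𝓡 := hreg.2.1 ht
      have htlt : r < t := hreg.2.2 t ht
      have hmes' : mes t ≤ n := Nat.lt_succ_iff.1 (lt_of_lt_of_le (mes_lt htlt) hmes)
      exact ih t hmes' htmem ℓ ρ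

end MainAux

/-- **Proposition (path expression = ancestor expression of the EIF).** For every pattern
`r ≠ 1_d`, the path expression `Σ_{Ξ∈Π_r} Σ_{s∈Ξ, s≠1_d} EIF_{Ξ,s}(ℓ, ρ)` of the efficient
influence function of pattern `r` equals its ancestor expression
`Σ_{s∈Ans_r, s≠1_d} m(ℓ,s)·(1{ρ=s} − O_s(ℓ)·1{ρ∈PA(s)})·Σ_{ζ∈Υ_{s,r}} ∏_{w∈ζ, w≠s} O_w(ℓ)`. -/
theorem eif_path_eq_ancestor_expression [∀ j, Nonempty (X j)]
    (𝓡 : Finset (Pat d)) (h𝓡 : allOnes d ∈ 𝓡)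
    (PA : Pat d → Finset (Pat d)) (hG : IsRegularGraph 𝓡 PA)
    (p : (∀ j, X j) → Pat d → ℝ)
    (hpmf : IsJointPMF 𝓡 p) (hpos : MargPos 𝓡 p)
    (hfact : SelOddsFactorizes 𝓡 PA p)
    (θ : (∀ j, X j) → ℝ)
    (Υ : Pat d → Pat d → Finset (List (Pat d)))
    (hΥ : ∀ u v, ∀ Ξ, Ξ ∈ Υ u v ↔ IsPath 𝓡 PA u v Ξ) :
    ∀ r ∈ 𝓡, r ≠ allOnes d → ∀ (ℓ : ∀ j, X j), ∀ ρ ∈ 𝓡,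
      (∑ Ξ ∈ Υ (allOnes d) r,
        (Ξ.map fun s => if s = allOnes d then (0:ℝ) else
          ((∑ ℓ' ∈ univ.filter (fun ℓ' => agree s ℓ ℓ'),
              θ ℓ' * p ℓ' (allOnes d) *
                (Ξ.map fun τ => if s < τ ∧ τ ≠ allOnes d then odds p PA τ ℓ' else 1).prod)
            / obsPA p s ℓ (PA s))
          * ((if ρ = s then (1:ℝ) else 0)
              - odds p PA s ℓ * (if ρ ∈ PA s then (1:ℝ) else 0))
          * (Ξ.map fun w => if w < s then odds p PA w ℓ else 1).prod).sum)
      = ∑ s ∈ (𝓡.filter fun s => (Υ s r).Nonempty).erase (allOnes d),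
          ((∑ ℓ' ∈ univ.filter (fun ℓ' => agree s ℓ ℓ'), θ ℓ' * p ℓ' s) / obsP p s ℓ s)
          * ((if ρ = s then (1:ℝ) else 0)
              - odds p PA s ℓ * (if ρ ∈ PA s then (1:ℝ) else 0))
          * ∑ ζ ∈ Υ s r,
              (ζ.map fun w => if w = s then (1:ℝ) else odds p PA w ℓ).prod := by
  intro r hr hrne ℓ ρ _
  have haux := main_aux 𝓡 h𝓡 PA hG p hpos hfact θ Υ hΥ (mes r) r le_rfl hr ℓ ρ
  have hfin : (∑ s ∈ 𝓡.erase (allOnes d),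
        mT p θ ℓ s * indT p PA ℓ ρ s * ∑ ζ ∈ Υ s r, zP p PA ℓ s ζ)
      = ∑ s ∈ (𝓡.filter fun s => (Υ s r).Nonempty).erase (allOnes d),
          mT p θ ℓ s * indT p PA ℓ ρ s * ∑ ζ ∈ Υ s r, zP p PA ℓ s ζ := by
    have hset : ((𝓡.filter fun s => (Υ s r).Nonempty).erase (allOnes d))
        = (𝓡.erase (allOnes d)).filter (fun s => (Υ s r).Nonempty) := by
      ext s
      simp only [Finset.mem_erase, Finset.mem_filter]
      tauto
    rw [hset]
    symm
    apply Finset.sum_filter_of_ne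
    intro s _ hne
    rw [Finset.nonempty_iff_ne_empty]
    intro h0
    rw [h0] at hne
    simp at hne
  exact haux.trans hfin
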